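/- For every Parikh vector P ∈ ℕ^σ (all entries positive) and every word w with Parikh vector P, the configuration graph G(P) contains a Hamiltonian path starting at w. -/

import Mathlib

/-- The Parikh vector of a word `w : Fin n → Fin σ`. -/
def parikh {n σ : ℕ} (w : Fin n → Fin σ) : Fin σ → ℕ :=
  fun a => (Finset.univ.filter fun i => w i = a).card

/-- Words of length `n` over alphabet `Fin σ` with Parikh vector `P`. -/
abbrev Words (n σ : ℕ) (P : Fin σ → ℕ) := {w : Fin n → Fin σ // parikh w = P}

/-- `u` is obtained from `w` by a single 2-swap. -/
def isSwap {n σ : ℕ} (w u : Fin n → Fin σ) : Prop :=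
  ∃ i j : Fin n, i ≠ j ∧ w i ≠ w j ∧ u = w ∘ Equiv.swap i j

/-- The configuration graph `G(P)`. -/
def configGraph (n σ : ℕ) (P : Fin σ → ℕ) : SimpleGraph (Words n σ P) :=
  SimpleGraph.fromRel fun w u => isSwap w.1 u.1

section Aux

variable {V : Type*} {G : SimpleGraph V}

lemma exists_walk_of_chain (a : V) (l : List V) (h : List.Chain G.Adj a l) :
    ∃ (b : V) (p : G.Walk a b), p.support = a :: l := by
  induction l generalizing a with
  | nil => exact ⟨a, .nil, rfl⟩
  | cons c l ih =>
    rw [List.Chain, List.chain_cons] at h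
    obtain ⟨b, p, hp⟩ := ih c h.2
    exact ⟨b, .cons h.1 p, by simp [hp]⟩

lemma chain_append_of {R : V → V → Prop} {a b : V} {l₁ l₂ : List V}
    (h1 : List.Chain R a l₁) (h2 : R ((a :: l₁).getLast (List.cons_ne_nil _ _)) b)
    (h3 : List.Chain R b l₂) : List.Chain R a (l₁ ++ b :: l₂) := by
  induction l₁ generalizing a with
  | nil => exact List.Chain.cons (by simpa using h2) h3
  | cons c l ih =>
    rw [List.Chain, List.chain_cons] at h1
    exact List.Chain.cons h1.1 (ih h1.2 (by rw [← List.getLast_cons (List.cons_ne_nil _ _)]; exact h2))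

end Aux

lemma parikh_snoc {n σ : ℕ} (f : Fin n → Fin σ) (a : Fin σ) :
    parikh (Fin.snoc f a) = fun b => parikh f b + if a = b then 1 else 0 := by
  funext b
  simp only [parikh, Finset.card_filter]
  rw [Fin.sum_univ_castSucc]
  simp only [Fin.snoc_castSucc, Fin.snoc_last]

lemma parikh_comp_equiv {n σ : ℕ} (w : Fin n → Fin σ) (e : Fin n ≃ Fin n) :
    parikh (w ∘ e) = parikh w := by
  funext b
  exact Finset.card_equiv e (by simp)

lemma one_le_parikh_apply {n σ : ℕ} (w : Fin n → Fin σ) (i : Fin n) :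
    1 ≤ parikh w (w i) := by
  apply Finset.card_pos.mpr
  exact ⟨i, by simp⟩

lemma exists_index_of_one_le {n σ : ℕ} (w : Fin n → Fin σ) (b : Fin σ)
    (h : 1 ≤ parikh w b) : ∃ i, w i = b := by
  obtain ⟨i, hi⟩ := Finset.card_pos.mp (lt_of_lt_of_le zero_lt_one h)
  exact ⟨i, (Finset.mem_filter.mp hi).2⟩

lemma isSwap_snoc {n σ : ℕ} {f g : Fin n → Fin σ} (h : isSwap f g) (a : Fin σ) :
    isSwap (Fin.snoc f a) (Fin.snoc g a) := by
  obtain ⟨i, j, hij, hfij, rfl⟩ := h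
  refine ⟨i.castSucc, j.castSucc, by simpa using hij, by simpa using hfij, ?_⟩
  funext k
  refine Fin.lastCases ?_ (fun k => ?_) k
  · simp [Equiv.swap_apply_of_ne_of_ne (Fin.castSucc_lt_last i).ne'
      (Fin.castSucc_lt_last j).ne']
  · simp [(Fin.castSucc_injective n).swap_apply]

lemma adj_of_isSwap {n σ : ℕ} {P : Fin σ → ℕ} {u v : Words n σ P}
    (hne : u ≠ v) (h : isSwap u.1 v.1 ∨ isSwap v.1 u.1) : (configGraph n σ P).Adj u v := by
  rw [configGraph, SimpleGraph.fromRel_adj]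
  exact ⟨hne, h⟩

lemma cross_step {σ n : ℕ} (P : Fin σ → ℕ) (u : Words (n+1) σ P) (b : Fin σ)
    (hb : 1 ≤ P b) (hne : b ≠ u.1 (Fin.last n)) :
    ∃ v : Words (n+1) σ P, (configGraph (n+1) σ P).Adj u v ∧ v.1 (Fin.last n) = b := by
  have hpb : 1 ≤ parikh u.1 b := by rw [u.2]; exact hb
  obtain ⟨i, hi⟩ := exists_index_of_one_le u.1 b hpb
  have hilast : i ≠ Fin.last n := fun h => hne (by rw [← hi, h])
  refine ⟨⟨u.1 ∘ Equiv.swap i (Fin.last n), by rw [parikh_comp_equiv]; exact u.2⟩, ?_, ?_⟩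
  · apply adj_of_isSwap
    · intro h
      apply hne
      have := congrArg (fun z => z.1 (Fin.last n)) h
      simp only [Function.comp, Equiv.swap_apply_right] at this
      exact (this.trans hi).symm
    · exact Or.inl ⟨i, Fin.last n, hilast, by rw [hi]; exact hne, rfl⟩
  · show u.1 (Equiv.swap i (Fin.last n) (Fin.last n)) = b
    rw [Equiv.swap_apply_right, hi]

/-- The inductive hypothesis form: Hamiltonian chain from any start. -/
def HamChain (n σ : ℕ) : Prop :=
  ∀ (P : Fin σ → ℕ) (w : Words n σ P),
    ∃ t : List (Words n σ P), List.Chain (configGraph n σ P).Adj w t ∧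
      (w :: t).Nodup ∧ ∀ v, v ∈ w :: t

lemma fiber_path {σ n : ℕ} (IH : HamChain n σ) (P : Fin σ → ℕ) (a : Fin σ)
    (u : Words (n+1) σ P) (hu : u.1 (Fin.last n) = a) :
    ∃ t : List (Words (n+1) σ P), List.Chain (configGraph (n+1) σ P).Adj u t ∧
      (u :: t).Nodup ∧ ∀ v : Words (n+1) σ P, v ∈ u :: t ↔ v.1 (Fin.last n) = a := by
  classical
  have hPa : 1 ≤ P a := by
    rw [← u.2, ← hu]; exact one_le_parikh_apply u.1 (Fin.last n)
  set Q : Fin σ → ℕ := fun b => P b - if a = b then 1 else 0 with hQ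
  have key : ∀ v : Words (n+1) σ P, v.1 (Fin.last n) = a → parikh (Fin.init v.1) = Q := by
    intro v hv
    funext b
    have h1 : parikh (Fin.snoc (Fin.init v.1) a) = P := by
      rw [← hv, Fin.snoc_init_self]; exact v.2
    have h2 := congrFun (parikh_snoc (Fin.init v.1) a) b
    rw [h1] at h2
    show parikh (Fin.init v.1) b = P b - if a = b then 1 else 0
    split_ifs at h2 ⊢ <;> omega
  have φprop : ∀ f : Words n σ Q, parikh (Fin.snoc f.1 a) = P := by
    intro f
    rw [parikh_snoc]
    funext b
    have h3 : parikh f.1 b = P b - if a = b then 1 else 0 := congrFun f.2 b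
    rw [h3]
    rcases eq_or_ne a b with h | h
    · have hb1 : 1 ≤ P b := h ▸ hPa
      rw [if_pos h]
      omega
    · rw [if_neg h]
      omega
  set φ : Words n σ Q → Words (n+1) σ P := fun f => ⟨Fin.snoc f.1 a, φprop f⟩ with hφ
  have φinj : Function.Injective φ := by
    intro f g h
    apply Subtype.ext
    have := congrArg (fun z => Fin.init z.1) h
    simpa only [hφ, Fin.init_snoc] using this
  have φadj : ∀ f g, (configGraph n σ Q).Adj f g → (configGraph (n+1) σ P).Adj (φ f) (φ g) := by
    intro f g hfg
    rw [configGraph, SimpleGraph.fromRel_adj] at hfg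
    exact adj_of_isSwap (fun h => hfg.1 (φinj h))
      (hfg.2.imp (fun h => isSwap_snoc h a) (fun h => isSwap_snoc h a))
  set w' : Words n σ Q := ⟨Fin.init u.1, key u hu⟩ with hw'
  have hφw : φ w' = u := by
    apply Subtype.ext
    show Fin.snoc (Fin.init u.1) a = u.1
    rw [← hu, Fin.snoc_init_self]
  obtain ⟨t', hc', hnd', hall'⟩ := IH Q w'
  refine ⟨t'.map φ, ?_, ?_, ?_⟩
  · rw [← hφw]
    exact List.isChain_cons_map_of_isChain_cons φ φadj hc'
  · rw [← hφw, ← List.map_cons]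
    exact hnd'.map φinj
  · intro v
    rw [← hφw, ← List.map_cons]
    constructor
    · intro hv
      obtain ⟨f, _, rfl⟩ := List.mem_map.mp hv
      simp [hφ]
    · intro hv
      have hfv : φ ⟨Fin.init v.1, key v hv⟩ = v := by
        apply Subtype.ext
        show Fin.snoc (Fin.init v.1) a = v.1
        rw [← hv, Fin.snoc_init_self]
      rw [← hfv]
      exact List.mem_map_of_mem (hall' _)

lemma multi_step {σ n : ℕ} (IH : HamChain n σ) (P : Fin σ → ℕ) :
    ∀ L : List (Fin σ), L.Nodup → (∀ b ∈ L, 1 ≤ P b) →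
    ∀ u : Words (n+1) σ P, u.1 (Fin.last n) ∉ L →
    ∃ t : List (Words (n+1) σ P), List.Chain (configGraph (n+1) σ P).Adj u t ∧
      (u :: t).Nodup ∧
      ∀ v : Words (n+1) σ P, v ∈ u :: t ↔
        (v.1 (Fin.last n) = u.1 (Fin.last n) ∨ v.1 (Fin.last n) ∈ L) := by
  intro L
  induction L with
  | nil =>
    intro _ _ u _
    obtain ⟨t, h1, h2, h3⟩ := fiber_path IH P (u.1 (Fin.last n)) u rfl
    exact ⟨t, h1, h2, fun v => by simpa using h3 v⟩
  | cons b L ihL =>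
    intro hnd hpos u hu
    obtain ⟨t₁, hc₁, hnd₁, hmem₁⟩ := fiber_path IH P (u.1 (Fin.last n)) u rfl
    set u₁ := (u :: t₁).getLast (List.cons_ne_nil _ _) with hu₁
    have hu₁mem : u₁ ∈ u :: t₁ := List.getLast_mem _
    have hu₁fib : u₁.1 (Fin.last n) = u.1 (Fin.last n) := (hmem₁ u₁).mp hu₁mem
    have hbne : b ≠ u₁.1 (Fin.last n) := by
      rw [hu₁fib]
      intro h
      exact hu (h ▸ (List.mem_cons_self (a := b) (l := L)))
    obtain ⟨v, hadj, hvb⟩ := cross_step P u₁ b (hpos b ((List.mem_cons_self (a := b) (l := L)))) hbne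
    have hvL : v.1 (Fin.last n) ∉ L := by rw [hvb]; exact (List.nodup_cons.mp hnd).1
    obtain ⟨t₂, hc₂, hnd₂, hmem₂⟩ :=
      ihL (List.nodup_cons.mp hnd).2 (fun c hc => hpos c (List.mem_cons_of_mem _ hc)) v hvL
    have hsplit : u :: (t₁ ++ v :: t₂) = (u :: t₁) ++ (v :: t₂) := by simp
    refine ⟨t₁ ++ v :: t₂, chain_append_of hc₁ hadj hc₂, ?_, ?_⟩
    · rw [hsplit, List.nodup_append]
      refine ⟨hnd₁, hnd₂, ?_⟩
      intro x hx₁ y hx₂ hxy; subst hxy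
      have h1 := (hmem₁ x).mp hx₁
      have h2 := (hmem₂ x).mp hx₂
      rw [hvb] at h2
      apply hu
      rcases h2 with h | h
      · rw [← h1, h]; exact (List.mem_cons_self (a := b) (l := L))
      · rw [← h1]; exact List.mem_cons_of_mem _ h
    · intro x
      rw [hsplit, List.mem_append]
      constructor
      · rintro (hx | hx)
        · exact Or.inl ((hmem₁ x).mp hx)
        · rcases (hmem₂ x).mp hx with h | h
          · exact Or.inr (by rw [h, hvb]; exact (List.mem_cons_self (a := b) (l := L)))
          · exact Or.inr (List.mem_cons_of_mem _ h)
      · rintro (hx | hx)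
        · exact Or.inl ((hmem₁ x).mpr hx)
        · rcases List.mem_cons.mp hx with h | h
          · exact Or.inr ((hmem₂ x).mpr (Or.inl (by rw [h, hvb])))
          · exact Or.inr ((hmem₂ x).mpr (Or.inr h))

lemma main_ind (σ : ℕ) : ∀ n : ℕ, HamChain n σ := by
  intro n
  induction n with
  | zero =>
    intro P w
    refine ⟨[], List.Chain.nil, List.nodup_singleton _, fun v => ?_⟩
    have : v = w := Subtype.ext (funext fun i => i.elim0)
    simp [this]
  | succ n IH =>
    intro P w
    classical
    set a₀ := w.1 (Fin.last n) with ha₀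
    set L := ((Finset.univ.filter fun b : Fin σ => 1 ≤ P b).erase a₀).toList with hL
    have hLnd : L.Nodup := Finset.nodup_toList _
    have hLpos : ∀ b ∈ L, 1 ≤ P b := by
      intro b hb
      rw [hL, Finset.mem_toList, Finset.mem_erase, Finset.mem_filter] at hb
      exact hb.2.2
    have ha₀L : w.1 (Fin.last n) ∉ L := by
      rw [hL, Finset.mem_toList]
      exact fun h => (Finset.mem_erase.mp h).1 rfl
    obtain ⟨t, hc, hnd, hmem⟩ := multi_step IH P L hLnd hLpos w ha₀L
    refine ⟨t, hc, hnd, fun v => ?_⟩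
    rw [hmem v]
    by_cases h : v.1 (Fin.last n) = a₀
    · exact Or.inl h
    · refine Or.inr ?_
      rw [hL, Finset.mem_toList, Finset.mem_erase]
      refine ⟨h, Finset.mem_filter.mpr ⟨Finset.mem_univ _, ?_⟩⟩
      have := one_le_parikh_apply v.1 (Fin.last n)
      rwa [v.2] at this

theorem stmt17 (n σ : ℕ) (P : Fin σ → ℕ) (hP : ∀ i, 1 ≤ P i) (hn : ∑ i, P i = n)
    (w : Words n σ P) :
    ∃ (v : Words n σ P) (p : (configGraph n σ P).Walk w v), p.IsHamiltonian := by
  classical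
  obtain ⟨t, hc, hnd, hall⟩ := main_ind σ n P w
  obtain ⟨b, p, hp⟩ := exists_walk_of_chain w t hc
  refine ⟨b, p, fun v => ?_⟩
  rw [hp]
  convert List.count_eq_one_of_mem hnd (hall v)
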